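/- Assume U_n has a locally non-negative Bernstein basis p_{n,k} for {a,b}, f_0 ∈ U_n is strictly positive, and D_{f_0}U_n has a locally non-negative Bernstein basis q_{n-1,k}. Then the coefficients β_0,...,β_n in the expansion f_0 = Σ_{k=0}^n β_k p_{n,k} are all strictly positive. -/

import Mathlib

open Set Finset

/-- `f` has a zero of order exactly `k` at `a`. -/
def ZeroOfOrder (f : ℝ → ℝ) (a : ℝ) (k : ℕ) : Prop :=
  (∀ i < k, iteratedDeriv i f a = 0) ∧ iteratedDeriv k f a ≠ 0


lemma myIDW_open {U : Set ℝ} (hU : IsOpen U) (f : ℝ → ℝ) (j : ℕ) {x : ℝ} (hx : x ∈ U) :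
    iteratedDerivWithin j f U x = iteratedDeriv j f x := by
  rw [iteratedDerivWithin_eq_iteratedFDerivWithin, iteratedDeriv_eq_iteratedFDeriv,
    iteratedFDerivWithin_of_isOpen j hU hx]

lemma myIDW_eq_global {U : Set ℝ} (hU : IsOpen U) {s : Set ℝ} (hs : UniqueDiffOn ℝ s)
    (hsU : s ⊆ U) {f : ℝ → ℝ} {N : ℕ} (hf : ContDiffOn ℝ N f U) :
    ∀ j ≤ N, ∀ x ∈ s, iteratedDerivWithin j f s x = iteratedDeriv j f x := by
  intro j
  induction j with
  | zero => intro _ x hx; simp [iteratedDerivWithin_zero]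
  | succ j IH =>
    intro hj x hx
    have hjN : j ≤ N := Nat.le_of_succ_le hj
    rw [iteratedDerivWithin_succ]
    have h1 : derivWithin (iteratedDerivWithin j f s) s x
        = derivWithin (iteratedDeriv j f) s x :=
      derivWithin_congr (fun y hy => IH hjN y hy) (IH hjN x hx)
    have hdiff : DifferentiableAt ℝ (iteratedDeriv j f) x := by
      have hd : DifferentiableWithinAt ℝ (iteratedDerivWithin j f U) U x :=
        (hf.differentiableOn_iteratedDerivWithin (by exact_mod_cast hj) hU.uniqueDiffOn) x (hsU hx)
      have hd2 : DifferentiableWithinAt ℝ (iteratedDeriv j f) U x :=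
        hd.congr (fun y hy => (myIDW_open hU f j hy).symm) (myIDW_open hU f j (hsU hx)).symm
      exact hd2.differentiableAt (hU.mem_nhds (hsU hx))
    rw [h1, hdiff.derivWithin (hs x hx), ← iteratedDeriv_succ]

lemma myIteratedDeriv_cmul {c : ℝ} {f : ℝ → ℝ} {N j : ℕ} (hf : ContDiff ℝ N f) (hj : j ≤ N)
    (x : ℝ) : iteratedDeriv j (fun y => c * f y) x = c * iteratedDeriv j f x := by
  have : (fun y => c * f y) = c • f := rfl
  rw [this, ← iteratedDerivWithin_univ, iteratedDerivWithin_const_smul (Set.mem_univ x)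
    uniqueDiffOn_univ c ((hf.of_le (by exact_mod_cast hj)).contDiffOn.contDiffWithinAt (Set.mem_univ x)),
    iteratedDerivWithin_univ, smul_eq_mul]

lemma myIteratedDeriv_sum {ι : Type*} [DecidableEq ι] (s : Finset ι) {f : ι → ℝ → ℝ} {N : ℕ}
    (hf : ∀ i ∈ s, ContDiff ℝ N (f i)) (c : ι → ℝ) {j : ℕ} (hj : j ≤ N) (x : ℝ) :
    iteratedDeriv j (fun y => ∑ i ∈ s, c i * f i y) x
      = ∑ i ∈ s, c i * iteratedDeriv j (f i) x := by
  induction s using Finset.induction_on with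
  | empty => simp [iteratedDeriv_eq_iteratedFDeriv, iteratedFDeriv_zero_fun]
  | insert a s hnotmem IH =>
    have hfa : ContDiff ℝ N (f a) := hf a (Finset.mem_insert_self a s)
    have hfs : ∀ i ∈ s, ContDiff ℝ N (f i) := fun i hi => hf i (Finset.mem_insert_of_mem hi)
    simp only [Finset.sum_insert hnotmem]
    have heq : (fun y => c a * f a y + ∑ i ∈ s, c i * f i y)
        = (fun y => c a * f a y) + (fun y => ∑ i ∈ s, c i * f i y) := rfl
    have hs1 : ContDiff ℝ N (fun y => c a * f a y) := contDiff_const.mul hfa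
    have hs2 : ContDiff ℝ N (fun y => ∑ i ∈ s, c i * f i y) :=
      ContDiff.sum (fun i hi => contDiff_const.mul (hfs i hi))
    rw [heq, ← iteratedDerivWithin_univ,
      iteratedDerivWithin_add (Set.mem_univ x) uniqueDiffOn_univ
        ((hs1.of_le (by exact_mod_cast hj)).contDiffOn.contDiffWithinAt (Set.mem_univ x))
        ((hs2.of_le (by exact_mod_cast hj)).contDiffOn.contDiffWithinAt (Set.mem_univ x)),
      iteratedDerivWithin_univ, iteratedDerivWithin_univ, IH hfs,
      myIteratedDeriv_cmul hfa hj]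
lemma mySign_right {f : ℝ → ℝ} {N k : ℕ} (hf : ContDiff ℝ N f) (hk : k ≤ N)
    {a δ : ℝ} (hδ : 0 < δ) (h0 : ∀ i < k, iteratedDeriv i f a = 0)
    (hnn : ∀ x ∈ Ico a (a + δ), 0 ≤ f x) : 0 ≤ iteratedDeriv k f a := by
  by_contra hneg
  push_neg at hneg
  have hcont : Continuous (iteratedDeriv k f) := hf.continuous_iteratedDeriv k (by exact_mod_cast hk)
  have hnb : ∀ᶠ y in nhds a, iteratedDeriv k f y < 0 :=
    hcont.continuousAt.eventually_lt continuousAt_const hneg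
  obtain ⟨ε, hε, hball⟩ := Metric.eventually_nhds_iff_ball.mp hnb
  obtain ⟨m, hmpos, hmδ, hmε⟩ : ∃ m, 0 < m ∧ m ≤ δ ∧ m ≤ ε :=
    ⟨min δ ε, lt_min hδ hε, min_le_left _ _, min_le_right _ _⟩
  obtain ⟨x, hax, hxa⟩ : ∃ x, a < x ∧ x - a = m / 2 := ⟨a + m / 2, by linarith, by ring⟩
  rcases Nat.eq_zero_or_pos k with hk0 | hkpos
  · subst hk0
    have := hnn a ⟨le_refl a, by linarith⟩
    simp only [iteratedDeriv_zero] at hneg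
    linarith
  · obtain ⟨k', rfl⟩ : ∃ k', k = k' + 1 := ⟨k - 1, by omega⟩
    have hfIcc : ContDiffOn ℝ k' f (Icc a x) := (hf.of_le (by exact_mod_cast (show k' ≤ N by omega))).contDiffOn
    have hder : DifferentiableOn ℝ (iteratedDerivWithin k' f (Icc a x)) (Ioo a x) := by
      have h1 : DifferentiableOn ℝ (iteratedDerivWithin k' f (Icc a x)) (Icc a x) :=
        ContDiffOn.differentiableOn_iteratedDerivWithin hf.contDiffOn
          (by exact_mod_cast (show k' < N by omega)) (uniqueDiffOn_Icc hax)
      exact h1.mono Set.Ioo_subset_Icc_self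
    obtain ⟨x', hxIoo, heq⟩ := taylor_mean_remainder_lagrange (x₀ := a) (x := x) (n := k') hax.ne
      (by rw [Set.uIcc_of_le hax.le]; exact hfIcc)
      (by rw [Set.uIcc_of_le hax.le, Set.uIoo_of_le hax.le]; exact hder)
    rw [Set.uIcc_of_le hax.le] at heq
    rw [Set.uIoo_of_le hax.le] at hxIoo
    have htay : taylorWithinEval f k' (Icc a x) a x = 0 := by
      rw [taylor_within_apply]
      apply Finset.sum_eq_zero
      intro i hi
      have hiN : i ≤ N := by simp at hi; omega
      have h2 : iteratedDerivWithin i f (Icc a x) a = iteratedDeriv i f a :=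
        myIDW_eq_global isOpen_univ (uniqueDiffOn_Icc hax) (Set.subset_univ _)
          hf.contDiffOn i hiN a (Set.left_mem_Icc.mpr hax.le)
      rw [h2, h0 i (by simpa using hi)]
      simp
    rw [htay, sub_zero] at heq
    have hIDW : iteratedDerivWithin (k' + 1) f (Icc a x) x' = iteratedDeriv (k' + 1) f x' :=
      myIDW_eq_global isOpen_univ (uniqueDiffOn_Icc hax) (Set.subset_univ _)
        hf.contDiffOn (k' + 1) hk x' (Set.mem_Icc_of_Ioo hxIoo)
    have hx'neg : iteratedDeriv (k' + 1) f x' < 0 := by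
      apply hball
      simp only [Metric.mem_ball, Real.dist_eq, abs_sub_lt_iff]
      constructor
      · have h5 := hxIoo.2; linarith [hxa, hmε, hε]
      · have h5 := hxIoo.1; linarith [hε]
    have hfxneg : f x < 0 := by
      rw [heq, hIDW]
      have hxa0 : (0:ℝ) < x - a := by linarith
      have hpow : 0 < (x - a) ^ (k' + 1) := pow_pos hxa0 _
      have hfac : (0:ℝ) < (Nat.factorial (k' + 1) : ℝ) := Nat.cast_pos.mpr (Nat.factorial_pos _)
      exact div_neg_of_neg_of_pos (mul_neg_of_neg_of_pos hx'neg hpow) hfac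
    have hge : 0 ≤ f x := hnn x ⟨hax.le, by linarith⟩
    linarith

lemma mySign_left {f : ℝ → ℝ} {N k : ℕ} (hf : ContDiff ℝ N f) (hk : k ≤ N)
    {b δ : ℝ} (hδ : 0 < δ) (h0 : ∀ i < k, iteratedDeriv i f b = 0)
    (hnn : ∀ x ∈ Ioc (b - δ) b, 0 ≤ f x) : 0 ≤ (-1 : ℝ) ^ k * iteratedDeriv k f b := by
  have hg : ContDiff ℝ N (fun x => f (-x)) := hf.comp (contDiff_neg)
  have key : ∀ i : ℕ, iteratedDeriv i (fun x => f (-x)) (-b) = (-1:ℝ)^i * iteratedDeriv i f b := by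
    intro i
    rw [iteratedDeriv_comp_neg i f (-b), neg_neg, smul_eq_mul]
  have h0' : ∀ i < k, iteratedDeriv i (fun x => f (-x)) (-b) = 0 := by
    intro i hi; rw [key i, h0 i hi, mul_zero]
  have hnn' : ∀ x ∈ Ico (-b) (-b + δ), 0 ≤ (fun x => f (-x)) x := by
    intro x hx
    exact hnn (-x) ⟨by have := hx.2; linarith, by have := hx.1; linarith⟩
  have := mySign_right hg hk hδ h0' hnn'
  rwa [key k] at this
lemma myMul_order {U : Set ℝ} (hU : IsOpen U) {a : ℝ} (ha : a ∈ U) :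
    ∀ (j : ℕ) (u v : ℝ → ℝ), ContDiffOn ℝ j u U → ContDiffOn ℝ j v U →
    (∀ i < j, iteratedDeriv i u a = 0) →
    iteratedDeriv j (fun x => u x * v x) a = iteratedDeriv j u a * v a := by
  intro j
  induction j with
  | zero => intro u v _ _ _; simp
  | succ j IH =>
    intro u v hu hv h0
    have hud : ∀ y ∈ U, DifferentiableAt ℝ u y := fun y hy =>
      ((hu.differentiableOn (by simp)) y hy).differentiableAt (hU.mem_nhds hy)
    have hvd : ∀ y ∈ U, DifferentiableAt ℝ v y := fun y hy =>
      ((hv.differentiableOn (by simp)) y hy).differentiableAt (hU.mem_nhds hy)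
    have hEq : Set.EqOn (deriv (fun x => u x * v x))
        (fun x => deriv u x * v x + u x * deriv v x) U := by
      intro y hy
      exact deriv_mul (hud y hy) (hvd y hy)
    have hu' : ContDiffOn ℝ j (deriv u) U := hu.deriv_of_isOpen hU (by exact_mod_cast le_refl (j+1))
    have hv' : ContDiffOn ℝ j (deriv v) U := hv.deriv_of_isOpen hU (by exact_mod_cast le_refl (j+1))
    have huj : ContDiffOn ℝ j u U := hu.of_le (by exact_mod_cast Nat.le_succ j)
    have hvj : ContDiffOn ℝ j v U := hv.of_le (by exact_mod_cast Nat.le_succ j)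
    calc iteratedDeriv (j+1) (fun x => u x * v x) a
        = iteratedDeriv j (deriv (fun x => u x * v x)) a := by rw [← iteratedDeriv_succ']
      _ = iteratedDeriv j (fun x => deriv u x * v x + u x * deriv v x) a :=
          hEq.iteratedDeriv_of_isOpen hU j ha
      _ = iteratedDeriv j (fun x => deriv u x * v x) a
            + iteratedDeriv j (fun x => u x * deriv v x) a := by
          have := iteratedDerivWithin_add (𝕜 := ℝ)
            (f := fun x => deriv u x * v x) (g := fun x => u x * deriv v x)
            ha hU.uniqueDiffOn (hu'.mul hvj a ha) (huj.mul hv' a ha)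
          rw [myIDW_open hU _ j ha, myIDW_open hU _ j ha, myIDW_open hU _ j ha] at this
          exact this
      _ = iteratedDeriv j (deriv u) a * v a + iteratedDeriv j u a * deriv v a := by
          rw [IH (deriv u) v hu' hvj (fun i hi => by
              have h9 : iteratedDeriv (i+1) u a = 0 := h0 (i+1) (by omega)
              rwa [iteratedDeriv_succ'] at h9),
            IH u (deriv v) huj hv' (fun i hi => h0 i (by omega))]
      _ = iteratedDeriv (j+1) u a * v a := by
          rw [← iteratedDeriv_succ', h0 j (by omega), zero_mul, add_zero]

lemma myDiv_order {U : Set ℝ} (hU : IsOpen U) {a : ℝ} (ha : a ∈ U) {N : ℕ}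
    {g v P : ℝ → ℝ} (hg : ContDiffOn ℝ N g U) (hv : ContDiffOn ℝ N v U)
    (hva : v a ≠ 0) (hPg : ∀ x ∈ U, P x = g x * v x) {k : ℕ} (hk : k ≤ N)
    (hP0 : ∀ i < k, iteratedDeriv i P a = 0) :
    (∀ i < k, iteratedDeriv i g a = 0) ∧ iteratedDeriv k g a = iteratedDeriv k P a / v a := by
  have hPiter : ∀ j ≤ N, iteratedDeriv j P a = iteratedDeriv j (fun x => g x * v x) a := by
    intro j hj
    exact Set.EqOn.iteratedDeriv_of_isOpen (fun x hx => hPg x hx) hU j ha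
  have main : ∀ i ≤ k, ∀ i' < i, iteratedDeriv i' g a = 0 := by
    intro i
    induction i with
    | zero => intro _ i' hi'; omega
    | succ i IHi =>
      intro hi i' hi'
      rcases Nat.lt_succ_iff_lt_or_eq.mp hi' with h | rfl
      · exact IHi (by omega) i' h
      · have h1 : iteratedDeriv i' P a = iteratedDeriv i' g a * v a := by
          rw [hPiter i' (by omega)]
          exact myMul_order hU ha i' g v (hg.of_le (by exact_mod_cast (show i' ≤ N by omega)))
            (hv.of_le (by exact_mod_cast (show i' ≤ N by omega))) (IHi (by omega))
        rw [hP0 i' (by omega)] at h1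
        field_simp at h1
        exact (mul_eq_zero.mp h1.symm).resolve_right hva
  refine ⟨main k (le_refl k), ?_⟩
  have h1 : iteratedDeriv k P a = iteratedDeriv k g a * v a := by
    rw [hPiter k hk]
    exact myMul_order hU ha k g v (hg.of_le (by exact_mod_cast hk))
      (hv.of_le (by exact_mod_cast hk)) (main k (le_refl k))
  rw [h1]
  field_simp
lemma myMinIndex {m t : ℕ} (w : ℕ → ℝ) (D : ℕ → ℕ → ℝ)
    (htri : ∀ i < m, ∀ j < i, D j i = 0) (hdiag : ∀ i < m, D i i ≠ 0)
    (hz : ∀ j < t, ∑ i ∈ Finset.range m, w i * D j i = 0) (ht : t ≤ m) :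
    ∀ i < t, w i = 0 := by
  intro i
  induction i using Nat.strong_induction_on with
  | _ i IH =>
    intro hit
    have h := hz i hit
    rw [Finset.sum_eq_single i (fun c hc hci => by
        rcases lt_or_gt_of_ne hci with h' | h'
        · rw [IH c h' (by omega), zero_mul]
        · rw [htri c (Finset.mem_range.mp hc) i h', mul_zero])
      (fun hmem => absurd (Finset.mem_range.mpr (by omega)) hmem)] at h
    exact (mul_eq_zero.mp h).resolve_right (hdiag i (by omega))

lemma myIteratedDeriv_zero_fun {j : ℕ} {x : ℝ} : iteratedDeriv j (fun _ : ℝ => (0:ℝ)) x = 0 := by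
  simp [iteratedDeriv_eq_iteratedFDeriv, iteratedFDeriv_zero_fun]

set_option maxHeartbeats 1000000

/-- Theorem Thm7 (normalization property): if `U_n` has a locally non-negative Bernstein basis
`p_{n,k}`, `f₀ ∈ U_n` is strictly positive, and `D_{f₀}U_n` has a locally non-negative
Bernstein basis `q_{n-1,k}`, then the coefficients in `f₀ = Σ β_k p_{n,k}` are positive. -/
theorem normalization_property
    (n : ℕ) (hn : 1 ≤ n) (a b : ℝ) (hab : a < b)
    (p : ℕ → ℝ → ℝ) (q : ℕ → ℝ → ℝ) (f₀ : ℝ → ℝ) (β : ℕ → ℝ)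
    (hpsmooth : ∀ k ≤ n, ContDiff ℝ n (p k))
    (hqsmooth : ∀ k ≤ n - 1, ContDiff ℝ (n - 1) (q k))
    (hf₀smooth : ContDiff ℝ n f₀)
    (hpa : ∀ k ≤ n, ZeroOfOrder (p k) a k)
    (hpb : ∀ k ≤ n, ZeroOfOrder (p k) b (n - k))
    (hqa : ∀ k ≤ n - 1, ZeroOfOrder (q k) a k)
    (hqb : ∀ k ≤ n - 1, ZeroOfOrder (q k) b (n - 1 - k))
    -- local non-negativity of both bases at `{a,b}`
    (hploc : ∃ δ > 0, ∀ k ≤ n, ∀ x ∈ Ico a (a + δ) ∪ Ioc (b - δ) b, 0 ≤ p k x)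
    (hqloc : ∃ δ > 0, ∀ k ≤ n - 1, ∀ x ∈ Ico a (a + δ) ∪ Ioc (b - δ) b, 0 ≤ q k x)
    (hf₀pos : ∀ x ∈ Icc a b, 0 < f₀ x)
    -- `q_{n-1,k}` is a basis of `D_{f₀}U_n`
    (hD : ∀ k ≤ n, ∃ w : ℕ → ℝ, ∀ x ∈ Icc a b,
      deriv (fun y => p k y / f₀ y) x = ∑ i ∈ Finset.range n, w i * q i x)
    (hf₀ : ∀ x ∈ Icc a b, f₀ x = ∑ k ∈ Finset.range (n + 1), β k * p k x) :
    ∀ k ≤ n, 0 < β k := by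
  obtain ⟨δp, hδp, hploc'⟩ := hploc
  obtain ⟨δq, hδq, hqloc'⟩ := hqloc
  have haIcc : a ∈ Icc a b := left_mem_Icc.mpr hab.le
  have hbIcc : b ∈ Icc a b := right_mem_Icc.mpr hab.le
  have hf₀a : 0 < f₀ a := hf₀pos a haIcc
  have hf₀b : 0 < f₀ b := hf₀pos b hbIcc
  set U : Set ℝ := f₀ ⁻¹' (Ioi 0) with hUdef
  have hUopen : IsOpen U := (isOpen_Ioi).preimage hf₀smooth.continuous
  have hUpos : ∀ x ∈ U, 0 < f₀ x := fun x hx => hx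
  have hUIcc : Icc a b ⊆ U := fun x hx => hf₀pos x hx
  have haU : a ∈ U := hUIcc haIcc
  have hbU : b ∈ U := hUIcc hbIcc
  have huDO : UniqueDiffOn ℝ (Icc a b) := uniqueDiffOn_Icc hab
  have hcast : ((n:ℕ):WithTop ℕ∞) - 1 = (((n-1:ℕ)):WithTop ℕ∞) := by
    obtain ⟨m, hm⟩ : ∃ m, n = m + 1 := ⟨n - 1, by omega⟩
    rw [hm]; rfl
  have hqsmooth' : ∀ k ≤ n - 1, ContDiff ℝ ((n-1:ℕ)) (q k) := fun k hk =>
    (hqsmooth k hk).of_le (le_of_eq hcast.symm)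
  -- sign facts for p and q leading derivatives
  have hPa : ∀ k ≤ n, 0 < iteratedDeriv k (p k) a := by
    intro k hk
    refine lt_of_le_of_ne (mySign_right (hpsmooth k hk) hk hδp (hpa k hk).1
      (fun x hx => hploc' k hk x (Or.inl hx))) (Ne.symm (hpa k hk).2)
  have hPb : ∀ k ≤ n, 0 < (-1:ℝ) ^ (n - k) * iteratedDeriv (n - k) (p k) b := by
    intro k hk
    refine lt_of_le_of_ne (mySign_left (hpsmooth k hk) (by omega) hδp (hpb k hk).1
      (fun x hx => hploc' k hk x (Or.inr hx))) ?_
    exact Ne.symm (mul_ne_zero (pow_ne_zero _ (by norm_num)) (hpb k hk).2)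
  have hQa : ∀ i ≤ n - 1, 0 < iteratedDeriv i (q i) a := by
    intro i hi
    refine lt_of_le_of_ne (mySign_right (hqsmooth' i hi) hi hδq (hqa i hi).1
      (fun x hx => hqloc' i hi x (Or.inl hx))) (Ne.symm (hqa i hi).2)
  have hQb : ∀ i ≤ n - 1, 0 < (-1:ℝ) ^ (n - 1 - i) * iteratedDeriv (n - 1 - i) (q i) b := by
    intro i hi
    refine lt_of_le_of_ne (mySign_left (hqsmooth' i hi) (by omega) hδq (hqb i hi).1
      (fun x hx => hqloc' i hi x (Or.inr hx))) ?_
    exact Ne.symm (mul_ne_zero (pow_ne_zero _ (by norm_num)) (hqb i hi).2)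
  -- the functions g k = p k / f₀
  have hf₀C : ContDiffOn ℝ n f₀ U := hf₀smooth.contDiffOn
  have hgC : ∀ k ≤ n, ContDiffOn ℝ n (fun y => p k y / f₀ y) U := fun k hk =>
    ((hpsmooth k hk).contDiffOn).div hf₀C (fun x hx => ne_of_gt (hUpos x hx))
  have hPg : ∀ k, ∀ x ∈ U, p k x = (fun y => p k y / f₀ y) x * f₀ x := fun k x hx =>
    (div_mul_cancel₀ _ (ne_of_gt (hUpos x hx))).symm
  -- zero orders of g k at a and b
  have hga : ∀ k ≤ n, (∀ i < k, iteratedDeriv i (fun y => p k y / f₀ y) a = 0) ∧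
      iteratedDeriv k (fun y => p k y / f₀ y) a = iteratedDeriv k (p k) a / f₀ a :=
    fun k hk => myDiv_order hUopen haU (hgC k hk) hf₀C (ne_of_gt hf₀a) (hPg k) hk (hpa k hk).1
  have hgb : ∀ k ≤ n, (∀ i < n - k, iteratedDeriv i (fun y => p k y / f₀ y) b = 0) ∧
      iteratedDeriv (n - k) (fun y => p k y / f₀ y) b = iteratedDeriv (n - k) (p k) b / f₀ b :=
    fun k hk => myDiv_order hUopen hbU (hgC k hk) hf₀C (ne_of_gt hf₀b) (hPg k)
      (by omega) (hpb k hk).1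
  -- extract coefficient matrix W
  obtain ⟨W, hW⟩ : ∃ W : ℕ → ℕ → ℝ, ∀ k ≤ n, ∀ x ∈ Icc a b,
      deriv (fun y => p k y / f₀ y) x = ∑ i ∈ Finset.range n, W k i * q i x := by
    choose Wf hWf using hD
    exact ⟨fun k => if h : k ≤ n then Wf k h else fun _ => 0,
      fun k hk x hx => by simpa [hk] using hWf k hk x hx⟩
  have hqsm : ∀ i ∈ Finset.range n, ContDiff ℝ (n-1) (q i) :=
    fun i hi => hqsmooth' i (by have := Finset.mem_range.mp hi; omega)
  -- derivative transfer at a and b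
  have hgdC : ∀ k ≤ n, ContDiffOn ℝ (n-1) (deriv (fun y => p k y / f₀ y)) U := by
    intro k hk
    refine (hgC k hk).deriv_of_isOpen hUopen ?_
    have : ((n-1 : ℕ) : WithTop ℕ∞) + 1 = ((n : ℕ) : WithTop ℕ∞) := by
      exact_mod_cast congrArg (Nat.cast : ℕ → WithTop ℕ∞) (by omega : (n-1)+1 = n)
    exact le_of_eq this
  have hSkC : ∀ k, ContDiff ℝ (n-1) (fun x => ∑ i ∈ Finset.range n, W k i * q i x) :=
    fun k => ContDiff.sum (fun i hi => contDiff_const.mul (hqsm i hi))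
  have hTa : ∀ k ≤ n, ∀ j ≤ n - 1, ∀ y ∈ Icc a b,
      ∑ i ∈ Finset.range n, W k i * iteratedDeriv j (q i) y
        = iteratedDeriv (j+1) (fun y => p k y / f₀ y) y := by
    intro k hk j hj y hy
    have h1 : iteratedDeriv j (deriv (fun y => p k y / f₀ y)) y
        = iteratedDerivWithin j (deriv (fun y => p k y / f₀ y)) (Icc a b) y :=
      (myIDW_eq_global hUopen huDO hUIcc (hgdC k hk) j hj y hy).symm
    have h2 : iteratedDerivWithin j (deriv (fun y => p k y / f₀ y)) (Icc a b) y
        = iteratedDerivWithin j (fun x => ∑ i ∈ Finset.range n, W k i * q i x) (Icc a b) y :=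
      iteratedDerivWithin_congr (fun z hz => hW k hk z hz) hy
    have h3 : iteratedDerivWithin j (fun x => ∑ i ∈ Finset.range n, W k i * q i x) (Icc a b) y
        = iteratedDeriv j (fun x => ∑ i ∈ Finset.range n, W k i * q i x) y :=
      myIDW_eq_global hUopen huDO hUIcc ((hSkC k).contDiffOn) j hj y hy
    rw [iteratedDeriv_succ', ← myIteratedDeriv_sum (Finset.range n) hqsm (W k) hj y,
      h1, h2, h3]
  -- W lower-triangular vanishing at a
  have hWlow : ∀ k ≤ n, ∀ i, i + 1 < k → W k i = 0 := by
    intro k hk i hik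
    have := myMinIndex (W k) (fun j i => iteratedDeriv j (q i) a)
      (fun i hi j hj => (hqa i (by omega)).1 j hj)
      (fun i hi => (hqa i (by omega)).2)
      (fun j hj => by
        rw [hTa k hk j (by omega) a haIcc]
        exact (hga k hk).1 (j+1) (by omega))
      (by omega : k - 1 ≤ n)
    exact this i (by omega)
  have hWhigh : ∀ k ≤ n, ∀ i < n, k < i → W k i = 0 := by
    intro k hk i hin hki
    have key := myMinIndex (fun i' => W k (n-1-i')) (fun j i' => iteratedDeriv j (q (n-1-i')) b)
      (fun i' hi' j hj => by
        have h4 := (hqb (n-1-i') (by omega)).1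
        exact h4 j (by omega))
      (fun i' hi' => by
        have h4 := (hqb (n-1-i') (by omega)).2
        have : n - 1 - (n - 1 - i') = i' := by omega
        rwa [this] at h4)
      (fun j hj => by
        have hrefl := Finset.sum_range_reflect (fun i => W k i * iteratedDeriv j (q i) b) n
        rw [hrefl, hTa k hk j (by omega) b hbIcc]
        exact (hgb k hk).1 (j+1) (by omega))
      (by omega : n - 1 - k ≤ n)
    have h5 : W k (n - 1 - (n - 1 - i)) = 0 := key (n-1-i) (by omega)
    have h6 : n - 1 - (n - 1 - i) = i := by omega
    rwa [h6] at h5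
  -- diagonal signs
  have hWd1 : ∀ k, 1 ≤ k → k ≤ n → 0 < W k (k-1) := by
    intro k hk1 hkn
    have hsum := hTa k hkn (k-1) (by omega) a haIcc
    rw [Finset.sum_eq_single (k-1) (fun c hc hci => by
        rcases lt_or_gt_of_ne hci with h' | h'
        · rw [hWlow k hkn c (by omega), zero_mul]
        · rw [(hqa c (by have := Finset.mem_range.mp hc; omega)).1 (k-1) (by omega), mul_zero])
      (fun hmem => absurd (Finset.mem_range.mpr (by omega)) hmem)] at hsum
    have hkk : k - 1 + 1 = k := by omega
    rw [hkk, (hga k hkn).2] at hsum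
    have hnum : 0 < iteratedDeriv k (p k) a / f₀ a := div_pos (hPa k hkn) hf₀a
    have hden : 0 < iteratedDeriv (k-1) (q (k-1)) a := hQa (k-1) (by omega)
    nlinarith [hsum, hnum, hden]
  have hWd2 : ∀ k, k + 1 ≤ n → W k k < 0 := by
    intro k hkn
    have hsum := hTa k (by omega) (n-1-k) (by omega) b hbIcc
    rw [Finset.sum_eq_single k (fun c hc hci => by
        rcases lt_or_gt_of_ne hci with h' | h'
        · rw [(hqb c (by have := Finset.mem_range.mp hc; omega)).1 (n-1-k) (by omega), mul_zero]
        · rw [hWhigh k (by omega) c (Finset.mem_range.mp hc) h', zero_mul])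
      (fun hmem => absurd (Finset.mem_range.mpr (by omega)) hmem)] at hsum
    have hkk : n - 1 - k + 1 = n - k := by omega
    rw [hkk, (hgb k (by omega)).2] at hsum
    -- signs
    have hnum : 0 < (-1:ℝ) ^ (n - k) * (iteratedDeriv (n-k) (p k) b / f₀ b) := by
      have := hPb k (by omega)
      rcases Nat.even_or_odd (n - k) with he | ho
      · rw [he.neg_one_pow] at this ⊢
        rw [one_mul] at this ⊢
        exact div_pos this hf₀b
      · rw [ho.neg_one_pow] at this ⊢
        have hlt : iteratedDeriv (n-k) (p k) b < 0 := by nlinarith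
        have : iteratedDeriv (n-k) (p k) b / f₀ b < 0 := div_neg_of_neg_of_pos hlt hf₀b
        nlinarith
    have hden := hQb k (by omega)
    have hpar : (-1:ℝ) ^ (n - k) = -((-1:ℝ) ^ (n - 1 - k)) := by
      have : n - k = (n - 1 - k) + 1 := by omega
      rw [this, pow_succ]
      ring
    rw [hpar] at hnum
    by_contra hpos
    push_neg at hpos
    have h8 : 0 ≤ W k k * ((-1:ℝ)^(n-1-k) * iteratedDeriv (n-1-k) (q k) b) :=
      mul_nonneg hpos hden.le
    have h9 : (-1:ℝ)^(n-1-k) * (W k k * iteratedDeriv (n-1-k) (q k) b)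
        = (-1:ℝ)^(n-1-k) * (iteratedDeriv (n-k) (p k) b / f₀ b) := by rw [hsum]
    nlinarith [h8, h9, hnum]
  -- β 0 > 0
  have hβ0 : 0 < β 0 := by
    have h1 := hf₀ a haIcc
    rw [Finset.sum_eq_single 0 (fun c hc hci => by
        have h0 : iteratedDeriv 0 (p c) a = 0 :=
          (hpa c (by have := Finset.mem_range.mp hc; omega)).1 0 (by omega)
        rw [iteratedDeriv_zero] at h0
        rw [h0, mul_zero])
      (fun hmem => absurd (Finset.mem_range.mpr (by omega)) hmem)] at h1
    have hp0 : 0 < p 0 a := by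
      have := hPa 0 (by omega)
      rwa [iteratedDeriv_zero] at this
    nlinarith [hf₀a]
  -- coefficients c i vanish
  have hczero : ∀ i < n, ∑ k ∈ Finset.range (n+1), β k * W k i = 0 := by
    have hgdiff : ∀ k ≤ n, ∀ x ∈ U, DifferentiableAt ℝ (fun y => p k y / f₀ y) x := by
      intro k hk x hx
      exact (((hgC k hk).differentiableOn (by exact_mod_cast (show n ≠ 0 by omega))) x hx).differentiableAt
        (hUopen.mem_nhds hx)
    have hSd : ∀ x ∈ Icc a b,
        deriv (fun y => ∑ k ∈ Finset.range (n+1), β k * (p k y / f₀ y)) x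
          = ∑ k ∈ Finset.range (n+1), β k * deriv (fun y => p k y / f₀ y) x := by
      intro x hx
      rw [deriv_fun_sum (fun k hk => DifferentiableAt.const_mul
        (hgdiff k (by have := Finset.mem_range.mp hk; omega) x (hUIcc hx)) (β k))]
      exact Finset.sum_congr rfl (fun k hk => deriv_const_mul (β k)
        (hgdiff k (by have := Finset.mem_range.mp hk; omega) x (hUIcc hx)))
    have hSone : ∀ z ∈ Icc a b, ∑ k ∈ Finset.range (n+1), β k * (p k z / f₀ z) = 1 := by
      intro z hz
      have h1 : ∑ k ∈ Finset.range (n+1), β k * (p k z / f₀ z)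
          = (∑ k ∈ Finset.range (n+1), β k * p k z) / f₀ z := by
        rw [Finset.sum_div]
        exact Finset.sum_congr rfl (fun k _ => by rw [mul_div_assoc])
      rw [h1, ← hf₀ z hz]
      exact div_self (ne_of_gt (hf₀pos z hz))
    have hSzero : ∀ x ∈ Icc a b,
        deriv (fun y => ∑ k ∈ Finset.range (n+1), β k * (p k y / f₀ y)) x = 0 := by
      intro x hx
      have hdiffS : DifferentiableAt ℝ
          (fun y => ∑ k ∈ Finset.range (n+1), β k * (p k y / f₀ y)) x :=
        DifferentiableAt.fun_sum (fun k hk => DifferentiableAt.const_mul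
          (hgdiff k (by have := Finset.mem_range.mp hk; omega) x (hUIcc hx)) (β k))
      have h1 := hdiffS.derivWithin (huDO x hx)
      have h2 : derivWithin (fun y => ∑ k ∈ Finset.range (n+1), β k * (p k y / f₀ y))
          (Icc a b) x = derivWithin (fun _ => (1:ℝ)) (Icc a b) x :=
        derivWithin_congr (fun z hz => hSone z hz) (hSone x hx)
      rw [← h1, h2]
      exact congrFun (derivWithin_const _ _) x
    have hTzero : ∀ x ∈ Icc a b,
        ∑ i ∈ Finset.range n, (∑ k ∈ Finset.range (n+1), β k * W k i) * q i x = 0 := by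
      intro x hx
      have h3 := hSzero x hx
      rw [hSd x hx] at h3
      have h4 : ∑ k ∈ Finset.range (n+1), β k * deriv (fun y => p k y / f₀ y) x
          = ∑ k ∈ Finset.range (n+1), β k * ∑ i ∈ Finset.range n, W k i * q i x :=
        Finset.sum_congr rfl (fun k hk => by
          rw [hW k (by have := Finset.mem_range.mp hk; omega) x hx])
      rw [h4] at h3
      calc ∑ i ∈ Finset.range n, (∑ k ∈ Finset.range (n+1), β k * W k i) * q i x
          = ∑ i ∈ Finset.range n, ∑ k ∈ Finset.range (n+1), β k * W k i * q i x := by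
            exact Finset.sum_congr rfl (fun i _ => by rw [Finset.sum_mul])
        _ = ∑ k ∈ Finset.range (n+1), ∑ i ∈ Finset.range n, β k * W k i * q i x :=
            Finset.sum_comm
        _ = ∑ k ∈ Finset.range (n+1), β k * ∑ i ∈ Finset.range n, W k i * q i x := by
            refine Finset.sum_congr rfl (fun k _ => ?_)
            rw [Finset.mul_sum]
            exact Finset.sum_congr rfl (fun i _ => by ring)
        _ = 0 := h3
    intro i hi
    refine myMinIndex (fun i => ∑ k ∈ Finset.range (n+1), β k * W k i)
      (fun j i => iteratedDeriv j (q i) a)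
      (fun i hi j hj => (hqa i (by omega)).1 j hj)
      (fun i hi => (hqa i (by omega)).2)
      (fun j hj => ?_) (le_refl n) i hi
    rw [← myIteratedDeriv_sum (Finset.range n) hqsm
      (fun i => ∑ k ∈ Finset.range (n+1), β k * W k i) (by omega : j ≤ n - 1) a]
    have h5 : iteratedDerivWithin j
        (fun x => ∑ i ∈ Finset.range n, (∑ k ∈ Finset.range (n+1), β k * W k i) * q i x)
        (Icc a b) a = iteratedDerivWithin j (fun _ => (0:ℝ)) (Icc a b) a :=
      iteratedDerivWithin_congr (fun z hz => hTzero z hz) haIcc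
    have h6 : ContDiff ℝ ((n-1:ℕ)) (fun x => ∑ i ∈ Finset.range n,
        (∑ k ∈ Finset.range (n+1), β k * W k i) * q i x) :=
      ContDiff.sum (fun i hi => contDiff_const.mul (hqsm i hi))
    rw [← myIDW_eq_global hUopen huDO hUIcc h6.contDiffOn j (by omega) a haIcc, h5,
      myIDW_eq_global (N := n - 1) hUopen huDO hUIcc contDiff_const.contDiffOn j (by omega) a haIcc,
      myIteratedDeriv_zero_fun]
  -- final induction
  have main : ∀ i ≤ n, 0 < β i := by
    intro i
    induction i with
    | zero => intro _; exact hβ0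
    | succ i IH =>
      intro hin
      have hβi : 0 < β i := IH (by omega)
      have hc := hczero i (by omega)
      have hsub : ({i, i+1} : Finset ℕ) ⊆ Finset.range (n+1) := by
        intro x hx
        simp only [Finset.mem_insert, Finset.mem_singleton] at hx
        rcases hx with rfl | rfl <;> exact Finset.mem_range.mpr (by omega)
      rw [← Finset.sum_subset hsub (fun k hk hknot => by
        simp only [Finset.mem_insert, Finset.mem_singleton] at hknot
        push_neg at hknot
        rcases Nat.lt_or_ge k i with h' | h'
        · rw [hWhigh k (by have := Finset.mem_range.mp hk; omega) i (by omega) h', mul_zero]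
        · rw [hWlow k (by have := Finset.mem_range.mp hk; omega) i (by omega), mul_zero])] at hc
      rw [Finset.sum_pair (by omega : i ≠ i + 1)] at hc
      have h1 : W i i < 0 := hWd2 i (by omega)
      have h2 : 0 < W (i+1) i := by
        have := hWd1 (i+1) (by omega) (by omega)
        simpa using this
      nlinarith [hc, hβi, h1, h2]
  exact main
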